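/- Let λ, λ₀, and λ_n (n ∈ ℕ) be finite Borel measures on a compact metric space X with λ₀ ≠ 0, λ_n ≪ λ for all n, λ₀ ≪ λ, and sup over measurable sets A of |λ_n(A) − λ₀(A)| tends to 0 as n → ∞. Let T : X → Y be a measurable map into a measurable space Y whose σ-algebra is countably generated and contains all singleton sets, and let μ be a σ-finite measure on Y with T_*λ ≪ μ. Let (λ_t^n), (λ_t^0), and (λ_t) be (T,μ)-disintegrations of λ_n, λ₀, and λ respectively. If for μ-a.e. t every λ_t^n is completely atomic (there is a countable set C ⊆ X with λ_t^n(X ∖ C) = 0), then λ_t^0 is completely atomic for μ-a.e. t; and if for μ-a.e. t every λ_t^n is non-atomic (λ_t^n({x}) = 0 for every x ∈ X), then λ_t^0 is non-atomic for μ-a.e. t. -/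

import Mathlib

open MeasureTheory ENNReal

/-- A `(T, μ)`-disintegration of a measure `ν` on `X`. -/
def IsDisintegration {X Y : Type*} [MeasurableSpace X] [MeasurableSpace Y]
    (ν : Measure X) (T : X → Y) (μ : Measure Y) (lam : Y → Measure X) : Prop :=
  (∀ᵐ t ∂μ, lam t ((T ⁻¹' {t})ᶜ) = 0) ∧
  (∀ f : X → ℝ≥0∞, Measurable f →
      AEMeasurable (fun t => ∫⁻ x, f x ∂(lam t)) μ) ∧
  (∀ f : X → ℝ≥0∞, Measurable f →
      ∫⁻ x, f x ∂ν = ∫⁻ t, ∫⁻ x, f x ∂(lam t) ∂μ)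


/-- The total-variation-type distance between two (possibly infinite) measures:
the supremum over measurable sets of `|α A - β A|`, computed in `ℝ≥0∞` via
truncated subtraction. -/
noncomputable def tvDist {X : Type*} [MeasurableSpace X] (α β : Measure X) : ℝ≥0∞ :=
  ⨆ (A : Set X) (_ : MeasurableSet A), ((α A - β A) + (β A - α A))

open Filter Set

lemma disint_measure_eq {X Y : Type*} [MeasurableSpace X] [MeasurableSpace Y]
    {ν : Measure X} {T : X → Y} {μ : Measure Y} {lam : Y → Measure X}
    (h : IsDisintegration ν T μ lam) {A : Set X} (hA : MeasurableSet A) :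
    ν A = ∫⁻ t, lam t A ∂μ := by
  have := h.2.2 (A.indicator 1) (measurable_one.indicator hA)
  simpa [lintegral_indicator_one hA] using this

lemma disint_aemeasurable {X Y : Type*} [MeasurableSpace X] [MeasurableSpace Y]
    {ν : Measure X} {T : X → Y} {μ : Measure Y} {lam : Y → Measure X}
    (h : IsDisintegration ν T μ lam) {A : Set X} (hA : MeasurableSet A) :
    AEMeasurable (fun t => lam t A) μ := by
  have := h.2.1 (A.indicator 1) (measurable_one.indicator hA)
  simpa [lintegral_indicator_one hA] using this

lemma keybound {X Y : Type*} [MeasurableSpace X] [MeasurableSpace Y]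
    (ν₀ ρ : Measure X) [IsFiniteMeasure ρ]
    (T : X → Y) (hT : Measurable T) (μ : Measure Y)
    (lamρ lam₀ : Y → Measure X)
    (hdisρ : IsDisintegration ρ T μ lamρ)
    (hdis₀ : IsDisintegration ν₀ T μ lam₀)
    (E : ℕ → Set X) (hE : ∀ k, MeasurableSet (E k))
    (A B : ℕ → Y → ℝ≥0∞) (hA : ∀ k, Measurable (A k)) (hB : ∀ k, Measurable (B k))
    (hAe : ∀ k, (fun t => lam₀ t (E k)) =ᵐ[μ] A k)
    (hBe : ∀ k, (fun t => lamρ t (E k)) =ᵐ[μ] B k)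
    (ε : ℝ≥0∞) :
    ε * μ {t | ε < ⨆ k, (A k t - B k t)} ≤ tvDist ρ ν₀ := by
  classical
  set P : ℕ → Set Y := fun k => {t | ε < A k t - B k t} with hP
  have hPm : ∀ k, MeasurableSet (P k) := fun k =>
    measurableSet_lt measurable_const ((hA k).sub (hB k))
  set Q : ℕ → Set Y := disjointed P with hQ
  have hQm : ∀ k, MeasurableSet (Q k) := MeasurableSet.disjointed hPm
  have hQP : ∀ k, Q k ⊆ P k := disjointed_subset P
  have hQdisj : Pairwise (Function.onFun Disjoint Q) := disjoint_disjointed P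
  have hQuniq : ∀ {j k : ℕ} {t : Y}, t ∈ Q j → t ∈ Q k → j = k := by
    intro j k t hj hk
    by_contra hjk
    exact Set.disjoint_left.1 (hQdisj hjk) hj hk
  set W : Set X := ⋃ k, E k ∩ T ⁻¹' Q k with hW
  have hWm : MeasurableSet W := MeasurableSet.iUnion fun k => (hE k).inter (hT (hQm k))
  set α : Y → ℝ≥0∞ := fun t => ⨆ k, (Q k).indicator (A k) t with hα
  set β : Y → ℝ≥0∞ := fun t => ⨆ k, (Q k).indicator (B k) t with hβ
  have hval : ∀ (C : ℕ → Y → ℝ≥0∞) (k : ℕ) (t : Y), t ∈ Q k →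
      (⨆ j, (Q j).indicator (C j) t) = C k t := by
    intro C k t ht
    apply le_antisymm
    · refine iSup_le fun j => ?_
      by_cases hj : t ∈ Q j
      · rw [hQuniq hj ht]; rw [Set.indicator_of_mem ht]
      · rw [Set.indicator_of_notMem hj]; exact zero_le
    · exact le_iSup_of_le k (Set.indicator_of_mem ht (C k)).symm.le
  have hval0 : ∀ (C : ℕ → Y → ℝ≥0∞) (t : Y), (∀ k, t ∉ Q k) →
      (⨆ j, (Q j).indicator (C j) t) = 0 := by
    intro C t ht
    simp only [iSup_eq_zero]
    intro j
    rw [Set.indicator_of_notMem (ht j)]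
  have hαm : Measurable α := Measurable.iSup fun k => (hA k).indicator (hQm k)
  have hβm : Measurable β := Measurable.iSup fun k => (hB k).indicator (hQm k)
  have hβα : ∀ t, β t ≤ α t := by
    intro t
    simp only [hα, hβ]
    by_cases ht : ∃ k, t ∈ Q k
    · obtain ⟨k, hk⟩ := ht
      rw [hval A k t hk, hval B k t hk]
      have : ε < A k t - B k t := hQP k hk
      have : B k t < A k t := by
        have h0 : 0 < A k t - B k t := lt_of_le_of_lt (zero_le) this
        exact tsub_pos_iff_lt.1 h0
      exact this.le
    · push_neg at ht
      rw [hval0 A t ht, hval0 B t ht]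
  -- a.e. facts
  have hae0 : ∀ᵐ t ∂μ, (∀ k, lam₀ t (E k) = A k t) ∧ (∀ k, lamρ t (E k) = B k t)
      ∧ lam₀ t ((T ⁻¹' {t})ᶜ) = 0 ∧ lamρ t ((T ⁻¹' {t})ᶜ) = 0 := by
    refine ((ae_all_iff.2 fun k => hAe k).and ((ae_all_iff.2 fun k => hBe k).and
      (hdis₀.1.and hdisρ.1))).mono ?_
    tauto
  have hαW : ∀ᵐ t ∂μ, α t ≤ lam₀ t W := by
    filter_upwards [hae0] with t ⟨h1, h2, h3, h4⟩
    simp only [hα]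
    by_cases ht : ∃ k, t ∈ Q k
    · obtain ⟨k, hk⟩ := ht
      rw [hval A k t hk, ← h1 k]
      calc lam₀ t (E k) ≤ lam₀ t ((E k ∩ T ⁻¹' {t}) ∪ (T ⁻¹' {t})ᶜ) := by
            refine measure_mono ?_
            intro x hx
            by_cases hxt : T x = t
            · exact Or.inl ⟨hx, hxt⟩
            · exact Or.inr hxt
        _ ≤ lam₀ t (E k ∩ T ⁻¹' {t}) + lam₀ t ((T ⁻¹' {t})ᶜ) := measure_union_le _ _
        _ = lam₀ t (E k ∩ T ⁻¹' {t}) := by rw [h3, add_zero]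
        _ ≤ lam₀ t W := by
            refine measure_mono ?_
            intro x ⟨hx1, hx2⟩
            have hxt : T x = t := hx2
            refine Set.mem_iUnion.2 ⟨k, hx1, ?_⟩
            show T x ∈ Q k
            rw [hxt]
            exact hk
    · push_neg at ht
      rw [hval0 A t ht]
      exact zero_le
  have hWβ : ∀ᵐ t ∂μ, lamρ t W ≤ β t := by
    filter_upwards [hae0] with t ⟨h1, h2, h3, h4⟩
    simp only [hβ]
    by_cases ht : ∃ k, t ∈ Q k
    · obtain ⟨k, hk⟩ := ht
      rw [hval B k t hk, ← h2 k]
      calc lamρ t W ≤ lamρ t (E k ∪ (T ⁻¹' {t})ᶜ) := by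
            refine measure_mono ?_
            intro x hx
            obtain ⟨j, hxj, hxQ⟩ := Set.mem_iUnion.1 hx
            have hxQ' : T x ∈ Q j := hxQ
            by_cases hxt : T x = t
            · rw [hxt] at hxQ'
              rw [hQuniq hk hxQ']
              exact Or.inl hxj
            · exact Or.inr hxt
        _ ≤ lamρ t (E k) + lamρ t ((T ⁻¹' {t})ᶜ) := measure_union_le _ _
        _ = lamρ t (E k) := by rw [h4, add_zero]
    · push_neg at ht
      rw [hval0 B t ht]
      have : W ⊆ (T ⁻¹' {t})ᶜ := by
        intro x hx
        obtain ⟨j, hxj, hxQ⟩ := Set.mem_iUnion.1 hx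
        have hxQ' : T x ∈ Q j := hxQ
        intro hxt
        have hxt' : T x = t := hxt
        rw [hxt'] at hxQ'
        exact ht j hxQ'
      calc lamρ t W ≤ lamρ t ((T ⁻¹' {t})ᶜ) := measure_mono this
        _ = 0 := h4
  have hβfin : ∫⁻ t, β t ∂μ ≠ ∞ := by
    have hle : ∀ᵐ t ∂μ, β t ≤ lamρ t Set.univ := by
      filter_upwards [hae0] with t ⟨h1, h2, h3, h4⟩
      simp only [hβ]
      by_cases ht : ∃ k, t ∈ Q k
      · obtain ⟨k, hk⟩ := ht
        rw [hval B k t hk, ← h2 k]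
        exact measure_mono (Set.subset_univ _)
      · push_neg at ht
        rw [hval0 B t ht]
        exact zero_le
    have heq := disint_measure_eq hdisρ MeasurableSet.univ
    exact ne_top_of_le_ne_top (measure_ne_top ρ _)
      (le_trans (lintegral_mono_ae hle) (le_of_eq heq.symm))
  -- main chain
  have hSQ : {t | ε < ⨆ k, (A k t - B k t)} = ⋃ k, Q k := by
    rw [iUnion_disjointed]
    ext t
    simp only [Set.mem_setOf_eq, Set.mem_iUnion, lt_iSup_iff]
    rfl
  have hQum : MeasurableSet (⋃ k, Q k) := MeasurableSet.iUnion hQm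
  have step1 : ε * μ {t | ε < ⨆ k, (A k t - B k t)} ≤ ∫⁻ t, (α t - β t) ∂μ := by
    rw [hSQ, ← lintegral_indicator_const hQum]
    refine lintegral_mono fun t => ?_
    by_cases ht : t ∈ ⋃ k, Q k
    · obtain ⟨k, hk⟩ := Set.mem_iUnion.1 ht
      rw [Set.indicator_of_mem ht, hα, hβ]
      simp only
      rw [hval A k t hk, hval B k t hk]
      exact (hQP k hk).le
    · rw [Set.indicator_of_notMem ht]
      exact zero_le
  have step2 : ∫⁻ t, (α t - β t) ∂μ = ∫⁻ t, α t ∂μ - ∫⁻ t, β t ∂μ :=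
    lintegral_sub hβm hβfin (Filter.Eventually.of_forall hβα)
  have step3 : ∫⁻ t, α t ∂μ ≤ ν₀ W := by
    rw [disint_measure_eq hdis₀ hWm]
    exact lintegral_mono_ae hαW
  have step4 : ρ W ≤ ∫⁻ t, β t ∂μ := by
    rw [disint_measure_eq hdisρ hWm]
    exact lintegral_mono_ae hWβ
  have step5 : ν₀ W - ρ W ≤ tvDist ρ ν₀ := by
    calc ν₀ W - ρ W ≤ (ρ W - ν₀ W) + (ν₀ W - ρ W) := le_add_self
      _ ≤ tvDist ρ ν₀ :=
          le_iSup₂ (f := fun (A : Set X) (_ : MeasurableSet A) =>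
            (ρ A - ν₀ A) + (ν₀ A - ρ A)) W hWm
  calc ε * μ {t | ε < ⨆ k, (A k t - B k t)} ≤ ∫⁻ t, (α t - β t) ∂μ := step1
    _ = ∫⁻ t, α t ∂μ - ∫⁻ t, β t ∂μ := step2
    _ ≤ ν₀ W - ρ W := tsub_le_tsub step3 step4
    _ ≤ tvDist ρ ν₀ := step5

lemma keylemma {X Y : Type*} [MeasurableSpace X] [MeasurableSpace Y]
    (ν₀ : Measure X) [IsFiniteMeasure ν₀]
    (νn : ℕ → Measure X) [∀ n, IsFiniteMeasure (νn n)]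
    (htv : Filter.Tendsto (fun n => tvDist (νn n) ν₀) Filter.atTop (nhds 0))
    (T : X → Y) (hT : Measurable T) (μ : Measure Y)
    (lamn : ℕ → Y → Measure X) (lam₀ : Y → Measure X)
    (hdisn : ∀ n, IsDisintegration (νn n) T μ (lamn n))
    (hdis₀ : IsDisintegration ν₀ T μ lam₀)
    (E : ℕ → Set X) (hE : ∀ k, MeasurableSet (E k)) :
    ∀ᵐ t ∂μ, (⨅ n, ⨆ k, (lam₀ t (E k) - lamn n t (E k))) = 0 := by
  have h0 : ∀ k, AEMeasurable (fun t => lam₀ t (E k)) μ := fun k =>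
    disint_aemeasurable hdis₀ (hE k)
  have hn : ∀ n k, AEMeasurable (fun t => lamn n t (E k)) μ := fun n k =>
    disint_aemeasurable (hdisn n) (hE k)
  set A : ℕ → Y → ℝ≥0∞ := fun k => (h0 k).mk _ with hA
  set B : ℕ → ℕ → Y → ℝ≥0∞ := fun n k => (hn n k).mk _ with hB
  have hnull : ∀ j : ℕ, μ (⋂ n, {t | ((j : ℝ≥0∞) + 1)⁻¹ < ⨆ k, (A k t - B n k t)}) = 0 := by
    intro j
    set ε : ℝ≥0∞ := ((j : ℝ≥0∞) + 1)⁻¹ with hε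
    have hε0 : ε ≠ 0 := by
      rw [hε]
      exact ENNReal.inv_ne_zero.2 (by simp)
    have hεtop : ε ≠ ∞ := by
      rw [hε]
      exact ENNReal.inv_ne_top.2 (by simp)
    have hb : ∀ n, μ (⋂ m, {t | ε < ⨆ k, (A k t - B m k t)}) ≤ ε⁻¹ * tvDist (νn n) ν₀ := by
      intro n
      have hkb := keybound ν₀ (νn n) T hT μ (lamn n) lam₀ (hdisn n) hdis₀ E hE A (B n)
        (fun k => (h0 k).measurable_mk) (fun k => (hn n k).measurable_mk)
        (fun k => (h0 k).ae_eq_mk) (fun k => (hn n k).ae_eq_mk) ε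
      calc μ (⋂ m, {t | ε < ⨆ k, (A k t - B m k t)})
          ≤ μ {t | ε < ⨆ k, (A k t - B n k t)} := measure_mono (Set.iInter_subset _ n)
        _ = ε⁻¹ * (ε * μ {t | ε < ⨆ k, (A k t - B n k t)}) := by
            rw [← mul_assoc, ENNReal.inv_mul_cancel hε0 hεtop, one_mul]
        _ ≤ ε⁻¹ * tvDist (νn n) ν₀ := mul_le_mul_right hkb _
    have htend : Filter.Tendsto (fun n => ε⁻¹ * tvDist (νn n) ν₀) Filter.atTop (nhds 0) := by
      have := ENNReal.Tendsto.const_mul htv (Or.inr (ENNReal.inv_ne_top.2 hε0))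
      simpa using this
    exact le_antisymm (ge_of_tendsto htend (Filter.Eventually.of_forall hb)) zero_le
  have hae1 : ∀ᵐ t ∂μ, ∀ j : ℕ, ∃ n, (⨆ k, (A k t - B n k t)) ≤ ((j : ℝ≥0∞) + 1)⁻¹ := by
    rw [ae_all_iff]
    intro j
    rw [ae_iff]
    refine measure_mono_null (fun t ht => ?_) (hnull j)
    simp only [Set.mem_setOf_eq, not_exists, not_le] at ht
    exact Set.mem_iInter.2 fun n => ht n
  have hae2 : ∀ᵐ t ∂μ, (∀ k, lam₀ t (E k) = A k t) ∧ ∀ n k, lamn n t (E k) = B n k t :=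
    (ae_all_iff.2 fun k => (h0 k).ae_eq_mk).and
      (ae_all_iff.2 fun n => ae_all_iff.2 fun k => (hn n k).ae_eq_mk)
  filter_upwards [hae1, hae2] with t h1 h23
  obtain ⟨h2, h3⟩ := h23
  have heq : ∀ n, (⨆ k, (lam₀ t (E k) - lamn n t (E k))) = ⨆ k, (A k t - B n k t) :=
    fun n => iSup_congr fun k => by rw [h2 k, h3 n k]
  by_contra hne
  obtain ⟨m, hm⟩ := ENNReal.exists_inv_nat_lt hne
  obtain ⟨n, hn'⟩ := h1 m
  have hle : (⨅ n, ⨆ k, (lam₀ t (E k) - lamn n t (E k))) ≤ ((m : ℝ≥0∞) + 1)⁻¹ :=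
    iInf_le_of_le n (by rw [heq n]; exact hn')
  have h2' : ((m : ℝ≥0∞) + 1)⁻¹ ≤ (m : ℝ≥0∞)⁻¹ :=
    ENNReal.inv_le_inv.2 le_self_add
  exact absurd ((hle.trans h2').trans_lt hm) (lt_irrefl _)

theorem disintegration_atomic_and_nonatomic_limit
    {X Y : Type*} [MetricSpace X] [CompactSpace X]
    [MeasurableSpace X] [BorelSpace X]
    [MeasurableSpace Y] [MeasurableSpace.CountablyGenerated Y] [MeasurableSingletonClass Y]
    (ν : Measure X) [IsFiniteMeasure ν]
    (ν₀ : Measure X) [IsFiniteMeasure ν₀] (hν₀ : ν₀ ≠ 0)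
    (νn : ℕ → Measure X) [∀ n, IsFiniteMeasure (νn n)]
    (habsn : ∀ n, νn n ≪ ν) (habs₀ : ν₀ ≪ ν)
    (htv : Filter.Tendsto (fun n => tvDist (νn n) ν₀) Filter.atTop (nhds 0))
    (T : X → Y) (hT : Measurable T)
    (μ : Measure Y) [SigmaFinite μ]
    (habs : ν.map T ≪ μ)
    (lamn : ℕ → Y → Measure X) (lam₀ lam : Y → Measure X)
    (hdisn : ∀ n, IsDisintegration (νn n) T μ (lamn n))
    (hdis₀ : IsDisintegration ν₀ T μ lam₀)
    (hdis : IsDisintegration ν T μ lam) :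
    ((∀ᵐ t ∂μ, ∀ n, ∃ C : Set X, C.Countable ∧ lamn n t Cᶜ = 0) →
        ∀ᵐ t ∂μ, ∃ C : Set X, C.Countable ∧ lam₀ t Cᶜ = 0) ∧
    ((∀ᵐ t ∂μ, ∀ n, ∀ x : X, lamn n t {x} = 0) →
        ∀ᵐ t ∂μ, ∀ x : X, lam₀ t {x} = 0) := by
  classical
  -- countable basis of X
  obtain ⟨Bs, hBc, hBne, hBbasis⟩ := TopologicalSpace.exists_countable_basis X
  obtain ⟨b, hb⟩ := Set.Countable.exists_eq_range (hBc.insert ∅) ⟨∅, Set.mem_insert _ _⟩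
  have hopen : ∀ i, IsOpen (b i) := by
    intro i
    have : b i ∈ insert ∅ Bs := hb ▸ Set.mem_range_self i
    rcases Set.mem_insert_iff.1 this with h | h
    · rw [h]; exact isOpen_empty
    · exact hBbasis.isOpen h
  have hbasis : ∀ (U : Set X), IsOpen U → ∀ x ∈ U, ∃ i, x ∈ b i ∧ b i ⊆ U := by
    intro U hU x hx
    obtain ⟨v, hv, hxv, hvU⟩ := hBbasis.exists_subset_of_mem_open hx hU
    have : v ∈ insert ∅ Bs := Set.mem_insert_of_mem _ hv
    rw [hb] at this
    obtain ⟨i, hi⟩ := this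
    exact ⟨i, hi ▸ hxv, hi ▸ hvU⟩
  obtain ⟨e, he⟩ := exists_surjective_nat (Finset ℕ)
  set F1 : ℕ → Set X := fun k => ⋂ i ∈ e k, b i with hF1def
  set F2 : ℕ → Set X := fun k => (⋃ i ∈ e k, b i)ᶜ with hF2def
  have hF1 : ∀ k, MeasurableSet (F1 k) :=
    fun k => (e k).finite_toSet.measurableSet_biInter fun i _ => (hopen i).measurableSet
  have hF2 : ∀ k, MeasurableSet (F2 k) :=
    fun k => ((e k).finite_toSet.measurableSet_biUnion fun i _ => (hopen i).measurableSet).compl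
  have hg1 := keylemma ν₀ νn htv T hT μ lamn lam₀ hdisn hdis₀ F1 hF1
  have hg2 := keylemma ν₀ νn htv T hT μ lamn lam₀ hdisn hdis₀ F2 hF2
  have hfin0 : ∀ᵐ t ∂μ, lam₀ t Set.univ ≠ ∞ := by
    have h := disint_measure_eq hdis₀ MeasurableSet.univ
    have hne : ∫⁻ t, lam₀ t Set.univ ∂μ ≠ ∞ := h ▸ measure_ne_top ν₀ _
    exact (ae_lt_top' (disint_aemeasurable hdis₀ MeasurableSet.univ) hne).mono
      fun t ht => ht.ne
  have hfinn : ∀ᵐ t ∂μ, ∀ n, lamn n t Set.univ ≠ ∞ := by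
    rw [ae_all_iff]
    intro n
    have h := disint_measure_eq (hdisn n) MeasurableSet.univ
    have hne : ∫⁻ t, lamn n t Set.univ ∂μ ≠ ∞ := h ▸ measure_ne_top (νn n) _
    exact (ae_lt_top' (disint_aemeasurable (hdisn n) MeasurableSet.univ) hne).mono
      fun t ht => ht.ne
  constructor
  · -- completely atomic case
    intro hyp
    filter_upwards [hyp, hg2, hfin0, hfinn] with t hC hg2t hf0 hfn
    rcases isEmpty_or_nonempty X with hXe | hXne
    · refine ⟨∅, Set.countable_empty, ?_⟩
      rw [Set.compl_empty, Set.univ_eq_empty_iff.2 hXe]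
      exact measure_empty
    choose C hCc hC0 using hC
    set x₀ : X := Classical.arbitrary X with hx₀
    set D : ℕ → Set X := fun n => insert x₀ (C n) with hD
    have hDc : ∀ n, (D n).Countable := fun n => (hCc n).insert _
    have hD0 : ∀ n, lamn n t (D n)ᶜ = 0 := fun n =>
      measure_mono_null (Set.compl_subset_compl.2 (Set.subset_insert _ _)) (hC0 n)
    have hDne : ∀ n, (D n).Nonempty := fun n => ⟨x₀, Set.mem_insert _ _⟩
    refine ⟨⋃ n, D n, Set.countable_iUnion hDc, ?_⟩
    have hmain : ∀ δ : ℝ≥0∞, δ ≠ 0 → δ ≠ ∞ → lam₀ t (⋃ n, D n)ᶜ ≤ 3 * δ := by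
      intro δ hδ0 hδtop
      have hδpos : (0 : ℝ≥0∞) < δ := pos_iff_ne_zero.2 hδ0
      have hlt0 : (⨅ n, ⨆ k, (lam₀ t (F2 k) - lamn n t (F2 k))) < δ := by
        rw [hg2t]; exact hδpos
      obtain ⟨n, hgn⟩ := iInf_lt_iff.1 hlt0
      haveI : IsFiniteMeasure (lam₀ t) := ⟨lt_top_iff_ne_top.2 hf0⟩
      have hlt : lam₀ t (D n) < lam₀ t (D n) + δ :=
        ENNReal.lt_add_right (measure_ne_top _ _) hδ0
      obtain ⟨U, hDU, hUopen, hUlt⟩ := Set.exists_isOpen_lt_of_lt (D n) _ hlt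
      have hDmeas : MeasurableSet (D n) := (hDc n).measurableSet
      have hUdiff : lam₀ t (U \ D n) ≤ δ := by
        rw [measure_diff hDU hDmeas.nullMeasurableSet (measure_ne_top _ _)]
        exact tsub_le_iff_right.2 (by rw [add_comm]; exact hUlt.le)
      set s : ℕ → Finset ℕ := fun m => (Finset.range m).filter (fun i => b i ⊆ U) with hs
      set V : ℕ → Set X := fun m => (⋃ i ∈ s m, b i)ᶜ with hV
      have hVmeas : ∀ m, MeasurableSet (V m) := fun m =>
        ((s m).finite_toSet.measurableSet_biUnion fun i _ => (hopen i).measurableSet).compl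
      have hssub : ∀ {m m' : ℕ}, m ≤ m' → s m ⊆ s m' := fun hmm' =>
        Finset.filter_subset_filter _ (Finset.range_subset_range.2 hmm')
      have hVanti : Antitone V := fun m m' hmm' =>
        Set.compl_subset_compl.2
          (Set.iUnion₂_subset fun i hi =>
            Set.subset_iUnion₂ (s := fun i (_ : i ∈ s m') => b i) i (hssub hmm' hi))
      have hVint : ⋂ m, V m = Uᶜ := by
        rw [← Set.compl_iUnion]
        congr 1
        apply subset_antisymm
        · refine Set.iUnion_subset fun m => Set.iUnion₂_subset fun i hi => ?_
          simp only [hs, Finset.mem_filter] at hi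
          exact hi.2
        · intro x hx
          obtain ⟨i, hxi, hiU⟩ := hbasis U hUopen x hx
          refine Set.mem_iUnion.2 ⟨i + 1, Set.mem_iUnion₂.2 ⟨i, ?_, hxi⟩⟩
          simp only [hs, Finset.mem_filter, Finset.mem_range]
          exact ⟨lt_add_one i, hiU⟩
      have htendV : Filter.Tendsto (fun m => lamn n t (V m)) Filter.atTop
          (nhds (lamn n t (⋂ m, V m))) :=
        tendsto_measure_iInter_atTop (fun m => (hVmeas m).nullMeasurableSet) hVanti
          ⟨0, ne_top_of_le_ne_top (hfn n) (measure_mono (Set.subset_univ _))⟩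
      have hUc0 : lamn n t (⋂ m, V m) = 0 := by
        rw [hVint]
        exact measure_mono_null (Set.compl_subset_compl.2 hDU) (hD0 n)
      rw [hUc0] at htendV
      obtain ⟨m, hm⟩ := (htendV.eventually_lt_const hδpos).exists
      obtain ⟨k, hk⟩ := he (s m)
      have hVF : V m = F2 k := by
        show (⋃ i ∈ s m, b i)ᶜ = (⋃ i ∈ e k, b i)ᶜ
        rw [hk]
      calc lam₀ t (⋃ n', D n')ᶜ
          ≤ lam₀ t (D n)ᶜ := measure_mono (Set.compl_subset_compl.2 (Set.subset_iUnion D n))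
        _ ≤ lam₀ t (Uᶜ ∪ (U \ D n)) := measure_mono (fun x hx => by
            by_cases hxU : x ∈ U
            · exact Or.inr ⟨hxU, hx⟩
            · exact Or.inl hxU)
        _ ≤ lam₀ t Uᶜ + lam₀ t (U \ D n) := measure_union_le _ _
        _ ≤ lam₀ t (V m) + δ := add_le_add
            (measure_mono (by rw [← hVint]; exact Set.iInter_subset V m)) hUdiff
        _ ≤ (lamn n t (V m) + (lam₀ t (V m) - lamn n t (V m))) + δ :=
            add_le_add_left le_add_tsub δ
        _ ≤ (δ + (⨆ k', (lam₀ t (F2 k') - lamn n t (F2 k')))) + δ := by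
            refine add_le_add_left (add_le_add hm.le ?_) δ
            rw [hVF]
            exact le_iSup (fun k' => lam₀ t (F2 k') - lamn n t (F2 k')) k
        _ ≤ (δ + δ) + δ := add_le_add_left (add_le_add_right hgn.le _) δ
        _ = 3 * δ := by ring
    refine le_antisymm ?_ zero_le
    refine ENNReal.le_of_forall_pos_le_add fun ε hε _ => ?_
    have hεne : (ε : ℝ≥0∞) ≠ 0 := by exact_mod_cast hε.ne'
    have h3 : lam₀ t (⋃ n, D n)ᶜ ≤ 3 * ((ε : ℝ≥0∞) / 3) := by
      refine hmain _ ?_ ?_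
      · simp [ENNReal.div_eq_zero_iff, hεne]
      · simp [ENNReal.div_eq_top]
    rw [ENNReal.mul_div_cancel' (by norm_num) (by norm_num)] at h3
    exact h3.trans (le_of_eq (zero_add _).symm)
  · -- non-atomic case
    intro hyp
    filter_upwards [hyp, hg1, hfinn] with t hA0 hg1t hfn
    intro x
    have hmain : ∀ δ : ℝ≥0∞, δ ≠ 0 → δ ≠ ∞ → lam₀ t {x} ≤ 2 * δ := by
      intro δ hδ0 hδtop
      have hδpos : (0 : ℝ≥0∞) < δ := pos_iff_ne_zero.2 hδ0
      have hlt0 : (⨅ n, ⨆ k, (lam₀ t (F1 k) - lamn n t (F1 k))) < δ := by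
        rw [hg1t]; exact hδpos
      obtain ⟨n, hgn⟩ := iInf_lt_iff.1 hlt0
      have hchoice : ∀ m : ℕ, ∃ i, x ∈ b i ∧ b i ⊆ Metric.ball x (1 / (m + 1)) := fun m =>
        hbasis _ Metric.isOpen_ball x (Metric.mem_ball_self (by positivity))
      choose i hi₁ hi₂ using hchoice
      set s : ℕ → Finset ℕ := fun m => (Finset.range (m + 1)).image i with hs
      set I : ℕ → Set X := fun m => ⋂ j ∈ s m, b j with hI
      have hImeas : ∀ m, MeasurableSet (I m) := fun m =>
        (s m).finite_toSet.measurableSet_biInter fun j _ => (hopen j).measurableSet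
      have hssub : ∀ {m m' : ℕ}, m ≤ m' → s m ⊆ s m' := fun hmm' =>
        Finset.image_subset_image (Finset.range_subset_range.2 (by omega))
      have hIanti : Antitone I := fun m m' hmm' y hy =>
        Set.mem_iInter₂.2 fun j hj => Set.mem_iInter₂.1 hy j (hssub hmm' hj)
      have hxI : ∀ m, x ∈ I m := by
        intro m
        refine Set.mem_biInter fun j hj => ?_
        have hj' : j ∈ (Finset.range (m + 1)).image i := hj
        obtain ⟨a, _, rfl⟩ := Finset.mem_image.1 hj'
        exact hi₁ a
      have hIim : ∀ m, I m ⊆ Metric.ball x (1 / (m + 1)) := by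
        intro m
        refine Set.Subset.trans (Set.biInter_subset_of_mem ?_) (hi₂ m)
        exact Finset.mem_image_of_mem i (Finset.mem_range.2 (lt_add_one m))
      have hIint : ⋂ m, I m = {x} := by
        apply subset_antisymm
        · intro y hy
          simp only [Set.mem_iInter] at hy
          simp only [Set.mem_singleton_iff]
          by_contra hyx
          have hd : 0 < dist y x := dist_pos.2 hyx
          obtain ⟨m, hm⟩ := exists_nat_one_div_lt hd
          exact absurd (Metric.mem_ball.1 (hIim m (hy m))) (not_lt.2 (by
            push_cast
            exact hm.le))
        · intro y hy
          rw [Set.mem_singleton_iff] at hy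
          subst hy
          exact Set.mem_iInter.2 hxI
      have htendI : Filter.Tendsto (fun m => lamn n t (I m)) Filter.atTop
          (nhds (lamn n t (⋂ m, I m))) :=
        tendsto_measure_iInter_atTop (fun m => (hImeas m).nullMeasurableSet) hIanti
          ⟨0, ne_top_of_le_ne_top (hfn n) (measure_mono (Set.subset_univ _))⟩
      rw [hIint, hA0 n x] at htendI
      obtain ⟨m, hm⟩ := (htendI.eventually_lt_const hδpos).exists
      obtain ⟨k, hk⟩ := he (s m)
      have hIF : I m = F1 k := by
        show (⋂ j ∈ s m, b j) = ⋂ i ∈ e k, b i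
        rw [hk]
      calc lam₀ t {x} ≤ lam₀ t (I m) := measure_mono (Set.singleton_subset_iff.2 (hxI m))
        _ ≤ lamn n t (I m) + (lam₀ t (I m) - lamn n t (I m)) := le_add_tsub
        _ ≤ δ + (⨆ k', (lam₀ t (F1 k') - lamn n t (F1 k'))) := by
            refine add_le_add hm.le ?_
            rw [hIF]
            exact le_iSup (fun k' => lam₀ t (F1 k') - lamn n t (F1 k')) k
        _ ≤ δ + δ := add_le_add_right hgn.le δ
        _ = 2 * δ := by ring
    refine le_antisymm ?_ zero_le
    refine ENNReal.le_of_forall_pos_le_add fun ε hε _ => ?_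
    have hεne : (ε : ℝ≥0∞) ≠ 0 := by exact_mod_cast hε.ne'
    have h2 : lam₀ t {x} ≤ 2 * ((ε : ℝ≥0∞) / 2) := by
      refine hmain _ ?_ ?_
      · simp [ENNReal.div_eq_zero_iff, hεne]
      · simp [ENNReal.div_eq_top]
    rw [ENNReal.mul_div_cancel' (by norm_num) (by norm_num)] at h2
    exact h2.trans (le_of_eq (zero_add _).symm)
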